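/- Let μ>0 with 1−4π²μj²≠0 for all integers j≥1, let ℓ≥1 be the number of integers j≥1 with 1−4π²μj²>0, and define ω⁰∈ℝ^ℓ by ω⁰_j=j√(1−4π²μj²) (all nonzero) and F(k,j)=(ω⁰·k)²−j²(1−4π²μj²). Let A∈ℝ^ℓ with A_i≠0 for all i and set U₁(θ,x)=Σ_{i=1}^ℓ A_i cos(2πθ_i)cos(2πix). Let R(θ,x) be a trigonometric polynomial that is a finite real linear combination of the functions cos(2πk·θ)cos(2πjx) with k∈ℤ^ℓ and j≥1, and assume F(k,j)≠0 for every mode (k,j) appearing in R other than the kernel modes (±e_i,i), i=1,…,ℓ. Then there exist a unique ω'∈ℝ^ℓ and a function U, unique among finite real linear combinations of the functions cos(2πk·θ)cos(2πjx) with F(k,j)≠0, such that (ω⁰·∂_θ)²U − ∂ₓ²U − μ∂ₓ⁴U + 2(ω'·∂_θ)(ω⁰·∂_θ)U₁ = R on ℝ^{ℓ+1}. -/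

import Mathlib

open Real

noncomputable section

/-- Directional derivative in the angle variables: `(ω·∂_θ)f`. -/
def thetaD {ℓ : ℕ} (ω : Fin ℓ → ℝ) (f : (Fin ℓ → ℝ) → ℝ → ℝ) :
    (Fin ℓ → ℝ) → ℝ → ℝ :=
  fun θ x => fderiv ℝ (fun θ' => f θ' x) θ ω

/-- Partial derivative in the space variable: `∂_x f`. -/
def xD {ℓ : ℕ} (f : (Fin ℓ → ℝ) → ℝ → ℝ) : (Fin ℓ → ℝ) → ℝ → ℝ :=
  fun θ x => deriv (fun y => f θ y) x

/-- The vector of elliptic linear frequencies `ω⁰_j = j √(1 − 4π²μj²)`, `j = 1,…,ℓ`. -/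
def omega0 (μ : ℝ) (ℓ : ℕ) : Fin ℓ → ℝ :=
  fun i => ((i : ℕ) + 1 : ℝ) * Real.sqrt (1 - 4 * π ^ 2 * μ * ((i : ℕ) + 1 : ℝ) ^ 2)

/-- `F(k,j) = (ω⁰·k)² − j²(1 − 4π²μj²)`. -/
def Fres (μ : ℝ) (ℓ : ℕ) (k : Fin ℓ → ℤ) (j : ℤ) : ℝ :=
  (∑ i, omega0 μ ℓ i * (k i : ℝ)) ^ 2 - (j : ℝ) ^ 2 * (1 - 4 * π ^ 2 * μ * (j : ℝ) ^ 2)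

/-- The exceptional (kernel) modes `(k,j) = (±e_i, i)`, `i = 1,…,ℓ`. -/
def ExcMode (ℓ : ℕ) (k : Fin ℓ → ℤ) (j : ℤ) : Prop :=
  ∃ i : Fin ℓ, (k = Pi.single i 1 ∨ k = -Pi.single i 1) ∧ j = (i : ℕ) + 1

/-- A finite real linear combination of modes `cos(2πk·θ)cos(2πjx)` with `F(k,j) ≠ 0`. -/
def IsNonresonantTrigPoly (μ : ℝ) (ℓ : ℕ) (U : (Fin ℓ → ℝ) → ℝ → ℝ) : Prop :=
  ∃ (Λ : Finset ((Fin ℓ → ℤ) × ℤ)) (c : (Fin ℓ → ℤ) × ℤ → ℝ),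
    (∀ p ∈ Λ, Fres μ ℓ p.1 p.2 ≠ 0) ∧
    ∀ θ x, U θ x = ∑ p ∈ Λ,
      c p * Real.cos (2 * π * ∑ i, (p.1 i : ℝ) * θ i) * Real.cos (2 * π * (p.2 : ℝ) * x)

/-- The first-order Lindstedt term `U₁(θ,x) = Σ_i A_i cos(2πθ_i)cos(2πix)`. -/
def lindU1 {ℓ : ℕ} (A : Fin ℓ → ℝ) : (Fin ℓ → ℝ) → ℝ → ℝ :=
  fun θ x => ∑ i, A i * Real.cos (2 * π * θ i) * Real.cos (2 * π * ((i : ℕ) + 1 : ℝ) * x)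

section LindstedtAux
open Finset

namespace Lind

variable {ℓ : ℕ}

/-- linear phase in θ -/
def tk (k : Fin ℓ → ℤ) (θ : Fin ℓ → ℝ) : ℝ := 2 * π * ∑ i, (k i : ℝ) * θ i

def klin (k : Fin ℓ → ℤ) (ω : Fin ℓ → ℝ) : ℝ := 2 * π * ∑ i, (k i : ℝ) * ω i

/-- a single mode -/
def md (p : (Fin ℓ → ℤ) × ℤ) (θ : Fin ℓ → ℝ) (x : ℝ) : ℝ :=
  Real.cos (tk p.1 θ) * Real.cos (2 * π * (p.2 : ℝ) * x)

def ms (p : (Fin ℓ → ℤ) × ℤ) (θ : Fin ℓ → ℝ) (x : ℝ) : ℝ :=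
  Real.sin (tk p.1 θ) * Real.cos (2 * π * (p.2 : ℝ) * x)

def mcs (p : (Fin ℓ → ℤ) × ℤ) (θ : Fin ℓ → ℝ) (x : ℝ) : ℝ :=
  Real.cos (tk p.1 θ) * Real.sin (2 * π * (p.2 : ℝ) * x)

def kclm (k : Fin ℓ → ℤ) : (Fin ℓ → ℝ) →L[ℝ] ℝ :=
  ∑ i, (2 * π * (k i : ℝ)) • (ContinuousLinearMap.proj i)

lemma kclm_apply (k : Fin ℓ → ℤ) (θ : Fin ℓ → ℝ) : kclm k θ = tk k θ := by
  simp only [kclm, tk, ContinuousLinearMap.sum_apply, ContinuousLinearMap.smul_apply,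
    ContinuousLinearMap.proj_apply, Finset.mul_sum, smul_eq_mul]
  exact Finset.sum_congr rfl fun i _ => by ring

lemma kclm_apply' (k : Fin ℓ → ℤ) (ω : Fin ℓ → ℝ) : kclm k ω = klin k ω := kclm_apply k ω

lemma hasFDerivAt_tk (k : Fin ℓ → ℤ) (θ : Fin ℓ → ℝ) :
    HasFDerivAt (fun θ' => tk k θ') (kclm k) θ := by
  have hfe : (fun θ' : Fin ℓ → ℝ => tk k θ') = ⇑(kclm k) :=
    funext fun θ' => (kclm_apply k θ').symm
  rw [hfe]; exact (kclm k).hasFDerivAt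

lemma hasFDerivAt_cos_tk (k : Fin ℓ → ℤ) (θ : Fin ℓ → ℝ) :
    HasFDerivAt (fun θ' => Real.cos (tk k θ')) ((-Real.sin (tk k θ)) • kclm k) θ :=
  (Real.hasDerivAt_cos (tk k θ)).comp_hasFDerivAt θ (hasFDerivAt_tk k θ)

lemma hasFDerivAt_sin_tk (k : Fin ℓ → ℤ) (θ : Fin ℓ → ℝ) :
    HasFDerivAt (fun θ' => Real.sin (tk k θ')) ((Real.cos (tk k θ)) • kclm k) θ :=
  (Real.hasDerivAt_sin (tk k θ)).comp_hasFDerivAt θ (hasFDerivAt_tk k θ)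

lemma hasFDerivAt_md (a : ℝ) (p : (Fin ℓ → ℤ) × ℤ) (x : ℝ) (θ : Fin ℓ → ℝ) :
    HasFDerivAt (fun θ' => a * md p θ' x)
      ((-(a * Real.sin (tk p.1 θ) * Real.cos (2 * π * (p.2 : ℝ) * x))) • kclm p.1) θ := by
  have h := (((hasFDerivAt_cos_tk p.1 θ).mul_const (Real.cos (2 * π * (p.2:ℝ) * x))).const_mul a)
  have e2 : a • Real.cos (2 * π * (p.2:ℝ) * x) • (-Real.sin (tk p.1 θ)) • kclm p.1
      = (-(a * Real.sin (tk p.1 θ) * Real.cos (2 * π * (p.2 : ℝ) * x))) • kclm p.1 := by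
    rw [smul_smul, smul_smul]; congr 1; ring
  rw [e2] at h; exact h

lemma hasFDerivAt_ms (a : ℝ) (p : (Fin ℓ → ℤ) × ℤ) (x : ℝ) (θ : Fin ℓ → ℝ) :
    HasFDerivAt (fun θ' => a * ms p θ' x)
      (((a * Real.cos (tk p.1 θ) * Real.cos (2 * π * (p.2 : ℝ) * x))) • kclm p.1) θ := by
  have h := (((hasFDerivAt_sin_tk p.1 θ).mul_const (Real.cos (2 * π * (p.2:ℝ) * x))).const_mul a)
  have e2 : a • Real.cos (2 * π * (p.2:ℝ) * x) • (Real.cos (tk p.1 θ)) • kclm p.1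
      = ((a * Real.cos (tk p.1 θ) * Real.cos (2 * π * (p.2 : ℝ) * x))) • kclm p.1 := by
    rw [smul_smul, smul_smul]; congr 1; ring
  rw [e2] at h; exact h


/-! sums of modes: θ-derivatives -/

lemma thetaD_sum_md {ι : Type*} (s : Finset ι) (P : ι → (Fin ℓ → ℤ) × ℤ) (c : ι → ℝ)
    (ω : Fin ℓ → ℝ) :
    thetaD ω (fun θ x => ∑ i ∈ s, c i * md (P i) θ x)
      = fun θ x => ∑ i ∈ s, (-(c i * klin (P i).1 ω)) * ms (P i) θ x := by
  funext θ x
  have hd : ∀ i ∈ s, DifferentiableAt ℝ (fun θ' => c i * md (P i) θ' x) θ :=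
    fun i _ => (hasFDerivAt_md (c i) (P i) x θ).differentiableAt
  simp only [thetaD]
  rw [fderiv_fun_sum hd, ContinuousLinearMap.sum_apply]
  refine Finset.sum_congr rfl fun i _ => ?_
  rw [(hasFDerivAt_md (c i) (P i) x θ).fderiv]
  simp [ms, kclm_apply']
  ring

lemma thetaD_sum_ms {ι : Type*} (s : Finset ι) (P : ι → (Fin ℓ → ℤ) × ℤ) (c : ι → ℝ)
    (ω : Fin ℓ → ℝ) :
    thetaD ω (fun θ x => ∑ i ∈ s, c i * ms (P i) θ x)
      = fun θ x => ∑ i ∈ s, (c i * klin (P i).1 ω) * md (P i) θ x := by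
  funext θ x
  have hd : ∀ i ∈ s, DifferentiableAt ℝ (fun θ' => c i * ms (P i) θ' x) θ :=
    fun i _ => (hasFDerivAt_ms (c i) (P i) x θ).differentiableAt
  simp only [thetaD]
  rw [fderiv_fun_sum hd, ContinuousLinearMap.sum_apply]
  refine Finset.sum_congr rfl fun i _ => ?_
  rw [(hasFDerivAt_ms (c i) (P i) x θ).fderiv]
  simp [md, kclm_apply']
  ring

/-! x-derivatives -/

lemma hasDerivAt_cos_lin (c x : ℝ) :
    HasDerivAt (fun y => Real.cos (c * y)) (-(Real.sin (c * x)) * c) x := by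
  exact ((Real.hasDerivAt_cos (c * x)).comp x ((hasDerivAt_id x).const_mul c)).congr_deriv (by ring)

lemma hasDerivAt_sin_lin (c x : ℝ) :
    HasDerivAt (fun y => Real.sin (c * y)) ((Real.cos (c * x)) * c) x := by
  exact ((Real.hasDerivAt_sin (c * x)).comp x ((hasDerivAt_id x).const_mul c)).congr_deriv (by ring)

lemma hasDerivAt_md (a : ℝ) (p : (Fin ℓ → ℤ) × ℤ) (θ : Fin ℓ → ℝ) (x : ℝ) :
    HasDerivAt (fun y => a * md p θ y) (-(a * (2 * π * (p.2 : ℝ))) * mcs p θ x) x := by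
  have h := ((hasDerivAt_cos_lin (2 * π * (p.2:ℝ)) x).const_mul
    (a * Real.cos (tk p.1 θ)))
  have hf : (fun y => a * md p θ y)
      = fun y => a * Real.cos (tk p.1 θ) * Real.cos (2 * π * (p.2:ℝ) * y) := by
    funext y; rw [md]; ring
  rw [hf]; exact h.congr_deriv (by rw [mcs]; ring)

lemma hasDerivAt_mcs (a : ℝ) (p : (Fin ℓ → ℤ) × ℤ) (θ : Fin ℓ → ℝ) (x : ℝ) :
    HasDerivAt (fun y => a * mcs p θ y) ((a * (2 * π * (p.2 : ℝ))) * md p θ x) x := by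
  have h := ((hasDerivAt_sin_lin (2 * π * (p.2:ℝ)) x).const_mul
    (a * Real.cos (tk p.1 θ)))
  have hf : (fun y => a * mcs p θ y)
      = fun y => a * Real.cos (tk p.1 θ) * Real.sin (2 * π * (p.2:ℝ) * y) := by
    funext y; rw [mcs]; ring
  rw [hf]; exact h.congr_deriv (by rw [md]; ring)

lemma xD_sum_md {ι : Type*} (s : Finset ι) (P : ι → (Fin ℓ → ℤ) × ℤ) (c : ι → ℝ) :
    xD (fun θ x => ∑ i ∈ s, c i * md (P i) θ x)
      = fun θ x => ∑ i ∈ s, (-(c i * (2 * π * ((P i).2 : ℝ)))) * mcs (P i) θ x := by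
  funext θ x
  have hd : ∀ i ∈ s, DifferentiableAt ℝ (fun y => c i * md (P i) θ y) x :=
    fun i _ => (hasDerivAt_md (c i) (P i) θ x).differentiableAt
  simp only [xD]
  rw [deriv_fun_sum hd]
  exact Finset.sum_congr rfl fun i _ => (hasDerivAt_md (c i) (P i) θ x).deriv

lemma xD_sum_mcs {ι : Type*} (s : Finset ι) (P : ι → (Fin ℓ → ℤ) × ℤ) (c : ι → ℝ) :
    xD (fun θ x => ∑ i ∈ s, c i * mcs (P i) θ x)
      = fun θ x => ∑ i ∈ s, (c i * (2 * π * ((P i).2 : ℝ))) * md (P i) θ x := by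
  funext θ x
  have hd : ∀ i ∈ s, DifferentiableAt ℝ (fun y => c i * mcs (P i) θ y) x :=
    fun i _ => (hasDerivAt_mcs (c i) (P i) θ x).differentiableAt
  simp only [xD]
  rw [deriv_fun_sum hd]
  exact Finset.sum_congr rfl fun i _ => (hasDerivAt_mcs (c i) (P i) θ x).deriv


/-! ## Characters and linear independence -/

def ph (q : (Fin ℓ → ℤ) × ℤ) (z : (Fin ℓ → ℝ) × ℝ) : ℝ :=
  (∑ i, (q.1 i : ℝ) * z.1 i) + (q.2 : ℝ) * z.2

lemma ph_add (q : (Fin ℓ → ℤ) × ℤ) (z w : (Fin ℓ → ℝ) × ℝ) :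
    ph q (z + w) = ph q z + ph q w := by
  simp only [ph, Prod.fst_add, Prod.snd_add, Pi.add_apply, mul_add]
  rw [Finset.sum_add_distrib]; ring

def chi (q : (Fin ℓ → ℤ) × ℤ) : Multiplicative ((Fin ℓ → ℝ) × ℝ) →* ℂ where
  toFun z := Complex.exp ((2 * π * ph q (Multiplicative.toAdd z) : ℝ) * Complex.I)
  map_one' := by simp [ph]
  map_mul' z w := by
    show Complex.exp ((2 * π * ph q (Multiplicative.toAdd (z * w)) : ℝ) * Complex.I) = _
    rw [toAdd_mul, ph_add, ← Complex.exp_add]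
    push_cast; ring_nf

lemma chi_apply (q : (Fin ℓ → ℤ) × ℤ) (z : (Fin ℓ → ℝ) × ℝ) :
    chi q (Multiplicative.ofAdd z) = Complex.exp ((2 * π * ph q z : ℝ) * Complex.I) := rfl

lemma exp_freq_eq (a b : ℤ)
    (h : ∀ t : ℝ, Complex.exp (((2 * π * ((a : ℝ) * t)) : ℝ) * Complex.I)
      = Complex.exp (((2 * π * ((b : ℝ) * t)) : ℝ) * Complex.I)) : a = b := by
  by_contra hne
  have hc : ((a : ℝ) - b) ≠ 0 := by
    intro h0; apply hne; have : (a:ℝ) = b := by linarith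
    exact_mod_cast this
  set t : ℝ := 1 / (2 * ((a:ℝ) - b)) with ht
  have h1 := h t
  have h2 : Complex.exp ((((2 * π * ((a:ℝ) * t)) : ℝ) * Complex.I)
      - (((2 * π * ((b:ℝ) * t)) : ℝ) * Complex.I)) = 1 := by
    rw [Complex.exp_sub, h1, div_self (Complex.exp_ne_zero _)]
  have h3 : (((2 * π * ((a:ℝ) * t)) : ℝ) * Complex.I)
      - (((2 * π * ((b:ℝ) * t)) : ℝ) * Complex.I) = (π : ℝ) * Complex.I := by
    have : (2 * π * ((a:ℝ) * t)) - (2 * π * ((b:ℝ) * t)) = π := by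
      rw [ht]; field_simp
    push_cast at this ⊢
    rw [← sub_mul]
    rw [show ((2:ℂ) * π * (a * t)) - (2 * π * (b * t)) = ((2 * π * ((a:ℝ) * t) : ℝ) : ℂ) - ((2 * π * ((b:ℝ) * t) : ℝ) : ℂ) by push_cast; ring]
    rw [← Complex.ofReal_sub, this]
  rw [h3, Complex.exp_pi_mul_I] at h2
  norm_num at h2

lemma chi_injective : Function.Injective (chi (ℓ := ℓ)) := by
  intro q q' h
  have hev : ∀ z : (Fin ℓ → ℝ) × ℝ,
      Complex.exp ((2 * π * ph q z : ℝ) * Complex.I)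
        = Complex.exp ((2 * π * ph q' z : ℝ) * Complex.I) := by
    intro z
    have := DFunLike.congr_fun h (Multiplicative.ofAdd z)
    simpa [chi_apply] using this
  have h1 : q.1 = q'.1 := by
    funext i0
    apply exp_freq_eq
    intro t
    have := hev (Pi.single i0 t, 0)
    have e : ∀ r : (Fin ℓ → ℤ) × ℤ, ph r (Pi.single i0 t, 0) = (r.1 i0 : ℝ) * t := by
      intro r
      simp only [ph, mul_zero, add_zero]
      rw [Finset.sum_eq_single i0]
      · simp
      · intro i _ hi; simp [Pi.single_apply, hi]
      · intro hmem; exact absurd (Finset.mem_univ i0) hmem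
    rwa [e q, e q'] at this
  have h2 : q.2 = q'.2 := by
    apply exp_freq_eq
    intro t
    have := hev (0, t)
    have e : ∀ r : (Fin ℓ → ℤ) × ℤ, ph r ((0 : Fin ℓ → ℝ), t) = (r.2 : ℝ) * t := by
      intro r; simp [ph]
    rwa [e q, e q'] at this
  exact Prod.ext h1 h2

lemma chi_li : LinearIndependent ℂ (fun q : (Fin ℓ → ℤ) × ℤ => ⇑(chi q)) :=
  (linearIndependent_monoidHom (Multiplicative ((Fin ℓ → ℝ) × ℝ)) ℂ).comp chi chi_injective

/-! ## signs, action, orbits -/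

def sgns : Finset (ℤ × ℤ) := {(1,1),(1,-1),(-1,1),(-1,-1)}

def act (σ : ℤ × ℤ) (q : (Fin ℓ → ℤ) × ℤ) : (Fin ℓ → ℤ) × ℤ :=
  (fun i => σ.1 * q.1 i, σ.2 * q.2)

def orb (p : (Fin ℓ → ℤ) × ℤ) : Finset ((Fin ℓ → ℤ) × ℤ) :=
  {p, (-p.1, p.2), (p.1, -p.2), (-p.1, -p.2)}

lemma mem_orb {p q : (Fin ℓ → ℤ) × ℤ} :
    q ∈ orb p ↔ (q.1 = p.1 ∨ q.1 = -p.1) ∧ (q.2 = p.2 ∨ q.2 = -p.2) := by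
  simp only [orb, Finset.mem_insert, Finset.mem_singleton, Prod.ext_iff]
  tauto

lemma mem_orb_self (p : (Fin ℓ → ℤ) × ℤ) : p ∈ orb p := by simp [orb]

lemma flip_iff {α : Type*} [SubtractionMonoid α] {a b : α} (c : α)
    (h : b = a ∨ b = -a) : (c = b ∨ c = -b) ↔ (c = a ∨ c = -a) := by
  rcases h with h | h <;> subst h
  · rfl
  · rw [neg_neg]; tauto

lemma orb_eq_of_mem {p q : (Fin ℓ → ℤ) × ℤ} (h : q ∈ orb p) : orb q = orb p := by
  ext r
  rw [mem_orb, mem_orb]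
  obtain ⟨h1, h2⟩ := mem_orb.1 h
  rw [flip_iff r.1 h1, flip_iff r.2 h2]

/-! orbit invariance of `md`, `tk`, `Fres` -/

lemma tk_neg (k : Fin ℓ → ℤ) (θ : Fin ℓ → ℝ) : tk (-k) θ = -(tk k θ) := by
  simp only [tk]
  have : ∀ i ∈ Finset.univ, (((-k) i : ℤ) : ℝ) * θ i = -(((k i : ℤ) : ℝ) * θ i) := by
    intro i _; rw [Pi.neg_apply]; push_cast; ring
  rw [Finset.sum_congr rfl this, Finset.sum_neg_distrib]
  ring

lemma md_orb {p q : (Fin ℓ → ℤ) × ℤ} (h : q ∈ orb p) (θ : Fin ℓ → ℝ) (x : ℝ) :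
    md q θ x = md p θ x := by
  rcases mem_orb.1 h with ⟨h1 | h1, h2 | h2⟩ <;>
    simp only [md, h1, h2, tk_neg, Real.cos_neg, Int.cast_neg] <;>
    rw [show 2 * π * -((p.2 : ℤ) : ℝ) * x = -(2 * π * ((p.2 : ℤ) : ℝ) * x) by ring] <;>
    rw [Real.cos_neg]


lemma flip_iff2 {α : Type*} [SubtractionMonoid α] {a b : α} :
    (-b = a ∨ -b = -a) ↔ (b = a ∨ b = -a) := by
  rw [neg_eq_iff_eq_neg, neg_inj]; tauto

lemma act_one (q : (Fin ℓ → ℤ) × ℤ) : act (1,1) q = q := by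
  simp [act]

lemma act_m1 (q : (Fin ℓ → ℤ) × ℤ) : act (-1,1) q = (-q.1, q.2) := by
  refine Prod.ext ?_ (by simp [act])
  funext i; simp [act]

lemma act_1m (q : (Fin ℓ → ℤ) × ℤ) : act (1,-1) q = (q.1, -q.2) := by
  refine Prod.ext ?_ (by simp [act])
  funext i; simp [act]

lemma act_mm (q : (Fin ℓ → ℤ) × ℤ) : act (-1,-1) q = (-q.1, -q.2) := by
  refine Prod.ext ?_ (by simp [act])
  funext i; simp [act]

lemma act_mem_orb_iff {σ : ℤ × ℤ} (hσ : σ ∈ sgns) (q p : (Fin ℓ → ℤ) × ℤ) :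
    act σ q ∈ orb p ↔ q ∈ orb p := by
  have hσ' : σ = (1,1) ∨ σ = (1,-1) ∨ σ = (-1,1) ∨ σ = (-1,-1) := by
    simpa [sgns] using hσ
  rcases hσ' with h | h | h | h <;> subst h
  · rw [act_one]
  · rw [act_1m, mem_orb, mem_orb]; simp only [flip_iff2]
  · rw [act_m1, mem_orb, mem_orb]; simp only [flip_iff2]
  · rw [act_mm, mem_orb, mem_orb]; simp only [flip_iff2]

/-! the four-exponential identity -/

lemma four_exp (A B : ℂ) :
    Complex.exp ((A + B) * Complex.I) + Complex.exp ((A - B) * Complex.I)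
      + Complex.exp ((-A + B) * Complex.I) + Complex.exp ((-A - B) * Complex.I)
      = 4 * Complex.cos A * Complex.cos B := by
  simp only [Complex.exp_mul_I, Complex.cos_add, Complex.sin_add, Complex.cos_sub,
    Complex.sin_sub, Complex.cos_neg, Complex.sin_neg]
  ring

lemma ph_act (s t : ℤ) (q : (Fin ℓ → ℤ) × ℤ) (z : (Fin ℓ → ℝ) × ℝ) :
    ph (act (s,t) q) z = (s : ℝ) * (∑ i, (q.1 i : ℝ) * z.1 i) + (t : ℝ) * ((q.2 : ℝ) * z.2) := by
  simp only [ph, act]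
  have : ∀ i ∈ Finset.univ, ((s * q.1 i : ℤ) : ℝ) * z.1 i
      = (s : ℝ) * ((q.1 i : ℝ) * z.1 i) := by
    intro i _; push_cast; ring
  rw [Finset.sum_congr rfl this, ← Finset.mul_sum]; push_cast; ring

lemma chi_sum_md (q : (Fin ℓ → ℤ) × ℤ) (θ : Fin ℓ → ℝ) (x : ℝ) :
    ∑ σ ∈ sgns, chi (act σ q) (Multiplicative.ofAdd (θ, x)) = ((4 * md q θ x : ℝ) : ℂ) := by
  have hs : (sgns : Finset (ℤ × ℤ))
      = insert (1,1) (insert (1,-1) (insert (-1,1) ({(-1,-1)} : Finset (ℤ × ℤ)))) := rfl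
  set A : ℂ := ((tk q.1 θ : ℝ) : ℂ) with hA
  set B : ℂ := ((2 * π * (q.2 : ℝ) * x : ℝ) : ℂ) with hB
  have key : ∀ s t : ℤ, ((2 * π * ph (act (s,t) q) (θ, x) : ℝ) : ℂ)
      = (s : ℂ) * A + (t : ℂ) * B := by
    intro s t
    rw [ph_act, hA, hB]
    push_cast [tk]
    ring
  rw [hs, Finset.sum_insert (by decide), Finset.sum_insert (by decide),
    Finset.sum_insert (by decide), Finset.sum_singleton]
  rw [chi_apply, chi_apply, chi_apply, chi_apply, key 1 1, key 1 (-1), key (-1) 1, key (-1) (-1)]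
  have e11 : (1 : ℂ) * A + (1 : ℂ) * B = A + B := by ring
  have e1m : (1 : ℂ) * A + ((-1 : ℤ) : ℂ) * B = A - B := by push_cast; ring
  have em1 : ((-1 : ℤ) : ℂ) * A + (1 : ℂ) * B = -A + B := by push_cast; ring
  have emm : ((-1 : ℤ) : ℂ) * A + ((-1 : ℤ) : ℂ) * B = -A - B := by push_cast; ring
  push_cast
  rw [show -(1:ℂ) * A + 1 * B = -A + B by ring, show (1:ℂ) * A + -1 * B = A - B by ring,
    show -(1:ℂ) * A + -1 * B = -A - B by ring, show (1:ℂ) * A + 1 * B = A + B by ring]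
  rw [show ((md q θ x : ℝ) : ℂ) = Complex.cos A * Complex.cos B from by
    rw [hA, hB]; simp [md, Complex.ofReal_mul, Complex.ofReal_cos]]
  linear_combination four_exp A B


lemma sgns_card : (sgns : Finset (ℤ × ℤ)).card = 4 := by decide

/-- Coefficient extraction: if a finite combination of `md` modes vanishes identically,
then the sum of coefficients over each orbit vanishes. -/
lemma coeff_vanish (Λ : Finset ((Fin ℓ → ℤ) × ℤ)) (d : (Fin ℓ → ℤ) × ℤ → ℝ)
    (H : ∀ θ x, ∑ q ∈ Λ, d q * md q θ x = 0) (p : (Fin ℓ → ℤ) × ℤ) :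
    ∑ q ∈ Λ.filter (fun q => q ∈ orb p), d q = 0 := by
  classical
  set v : (Fin ℓ → ℤ) × ℤ → (Multiplicative ((Fin ℓ → ℝ) × ℝ) → ℂ) :=
    fun q => ⇑(chi q) with hv
  set T : Finset (((Fin ℓ → ℤ) × ℤ) × (ℤ × ℤ)) := Λ ×ˢ sgns with hT
  set g : ((Fin ℓ → ℤ) × ℤ) × (ℤ × ℤ) → (Fin ℓ → ℤ) × ℤ := fun pr => act pr.2 pr.1 with hg
  have hsum0 : ∑ r ∈ T.image g,
      (∑ pr ∈ T.filter (fun pr => g pr = r), ((d pr.1 : ℂ))) • v r = 0 := by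
    have e1 : ∀ r ∈ T.image g,
        (∑ pr ∈ T.filter (fun pr => g pr = r), (d pr.1 : ℂ)) • v r
          = ∑ pr ∈ T.filter (fun pr => g pr = r), (d pr.1 : ℂ) • v (g pr) := by
      intro r _
      rw [Finset.sum_smul]
      exact Finset.sum_congr rfl fun pr hpr => by rw [(Finset.mem_filter.1 hpr).2]
    rw [Finset.sum_congr rfl e1,
      Finset.sum_fiberwise_of_maps_to (fun pr hpr => Finset.mem_image_of_mem g hpr)]
    rw [hT, Finset.sum_product]
    funext z
    simp only [Finset.sum_apply, Pi.smul_apply, smul_eq_mul, Pi.zero_apply]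
    have hz : z = Multiplicative.ofAdd (Multiplicative.toAdd z) := rfl
    have hinner : ∀ q ∈ Λ, ∑ σ ∈ sgns, (d q : ℂ) * v (g (q, σ)) z
        = (d q : ℂ) * ((4 * md q (Multiplicative.toAdd z).1 (Multiplicative.toAdd z).2 : ℝ) : ℂ) := by
      intro q _
      rw [← Finset.mul_sum]
      congr 1
      rw [show (∑ σ ∈ sgns, v (g (q, σ)) z)
          = ∑ σ ∈ sgns, chi (act σ q) (Multiplicative.ofAdd ((Multiplicative.toAdd z).1,
              (Multiplicative.toAdd z).2)) from rfl]
      exact chi_sum_md q _ _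
    rw [Finset.sum_congr rfl hinner]
    have : ∑ q ∈ Λ, (d q : ℂ) * ((4 * md q (Multiplicative.toAdd z).1 (Multiplicative.toAdd z).2 : ℝ) : ℂ)
        = 4 * ((∑ q ∈ Λ, d q * md q (Multiplicative.toAdd z).1 (Multiplicative.toAdd z).2 : ℝ) : ℂ) := by
      push_cast
      rw [Finset.mul_sum]
      exact Finset.sum_congr rfl fun q _ => by ring
    rw [this, H]
    simp
  have hcoeffs := linearIndependent_iff'.1 chi_li (T.image g)
    (fun r => ∑ pr ∈ T.filter (fun pr => g pr = r), (d pr.1 : ℂ)) hsum0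
  have hall : ∀ r, (∑ pr ∈ T.filter (fun pr => g pr = r), (d pr.1 : ℂ)) = 0 := by
    intro r
    by_cases hr : r ∈ T.image g
    · exact hcoeffs r hr
    · rw [Finset.filter_false_of_mem, Finset.sum_empty]
      intro pr hpr hgr
      exact hr (hgr ▸ Finset.mem_image_of_mem g hpr)
  have horb : ∑ r ∈ orb p, (∑ pr ∈ T.filter (fun pr => g pr = r), (d pr.1 : ℂ)) = 0 :=
    Finset.sum_eq_zero fun r _ => hall r
  rw [Finset.sum_fiberwise_eq_sum_filter] at horb
  have hfe : T.filter (fun pr => g pr ∈ orb p)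
      = (Λ.filter (fun q => q ∈ orb p)) ×ˢ sgns := by
    ext pr
    simp only [Finset.mem_filter, hT, Finset.mem_product]
    constructor
    · rintro ⟨⟨h1, h2⟩, h3⟩
      exact ⟨⟨h1, (act_mem_orb_iff h2 pr.1 p).1 h3⟩, h2⟩
    · rintro ⟨⟨h1, h3⟩, h2⟩
      exact ⟨⟨h1, h2⟩, (act_mem_orb_iff h2 pr.1 p).2 h3⟩
  rw [hfe, Finset.sum_product] at horb
  simp only [Finset.sum_const, sgns_card, nsmul_eq_mul, Nat.cast_ofNat] at horb
  have h4 : (∑ q ∈ Λ.filter (fun q => q ∈ orb p), ((d q : ℂ))) = 0 := by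
    have : (4 : ℂ) * (∑ q ∈ Λ.filter (fun q => q ∈ orb p), ((d q : ℂ))) = 0 := by
      rw [Finset.mul_sum]
      rw [show (∑ q ∈ Λ.filter (fun q => q ∈ orb p), (4:ℂ) * ((d q : ℂ)))
        = ∑ q ∈ Λ.filter (fun q => q ∈ orb p), (4:ℂ) * ((d q : ℂ)) from
        Finset.sum_congr rfl fun q _ => by ring]
      exact horb
    have h40 : (4 : ℂ) ≠ 0 := by norm_num
    exact (mul_eq_zero.1 this).resolve_left h40
  exact_mod_cast h4

/-- multiply coefficients by an orbit-invariant function -/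
lemma cancel (Λ : Finset ((Fin ℓ → ℤ) × ℤ)) (d g' : (Fin ℓ → ℤ) × ℤ → ℝ)
    (hg : ∀ p q, q ∈ orb p → g' q = g' p)
    (H : ∀ θ x, ∑ q ∈ Λ, d q * md q θ x = 0) :
    ∀ θ x, ∑ q ∈ Λ, g' q * d q * md q θ x = 0 := by
  classical
  intro θ x
  rw [← Finset.sum_fiberwise_of_maps_to
    (fun q (hq : q ∈ Λ) => Finset.mem_image_of_mem (fun q => orb q) hq)
    (fun q => g' q * d q * md q θ x)]
  apply Finset.sum_eq_zero
  intro c hc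
  obtain ⟨q0, hq0, hq0c⟩ := Finset.mem_image.1 hc
  have hfib : Λ.filter (fun q => orb q = c) = Λ.filter (fun q => q ∈ orb q0) := by
    ext q
    simp only [Finset.mem_filter, and_congr_right_iff]
    intro _
    constructor
    · intro h; rw [← hq0c] at h
      have : q ∈ orb q := mem_orb_self q
      rwa [h] at this
    · intro h; rw [orb_eq_of_mem h, hq0c]
  rw [hfib]
  have : ∀ q ∈ Λ.filter (fun q => q ∈ orb q0),
      g' q * d q * md q θ x = (g' q0 * md q0 θ x) * d q := by
    intro q hq
    have hmem := (Finset.mem_filter.1 hq).2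
    rw [hg q0 q hmem, md_orb hmem]
    ring
  rw [Finset.sum_congr rfl this, ← Finset.mul_sum,
    coeff_vanish Λ d H q0, mul_zero]


/-! ## Fres invariance and kernel modes -/

lemma sum_omega_neg (μ : ℝ) (k : Fin ℓ → ℤ) :
    (∑ i, omega0 μ ℓ i * (((-k) i : ℤ) : ℝ)) = -(∑ i, omega0 μ ℓ i * ((k i : ℤ) : ℝ)) := by
  have : ∀ i ∈ Finset.univ, omega0 μ ℓ i * (((-k) i : ℤ) : ℝ)
      = -(omega0 μ ℓ i * ((k i : ℤ) : ℝ)) := by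
    intro i _; rw [Pi.neg_apply]; push_cast; ring
  rw [Finset.sum_congr rfl this, Finset.sum_neg_distrib]

lemma Fres_orb (μ : ℝ) {p q : (Fin ℓ → ℤ) × ℤ} (h : q ∈ orb p) :
    Fres μ ℓ q.1 q.2 = Fres μ ℓ p.1 p.2 := by
  rcases mem_orb.1 h with ⟨h1 | h1, h2 | h2⟩ <;> rw [h1, h2] <;>
    simp only [Fres, sum_omega_neg, Int.cast_neg] <;> ring

def ker (i : Fin ℓ) : (Fin ℓ → ℤ) × ℤ := (Pi.single i 1, ((i : ℕ) : ℤ) + 1)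

lemma sum_single_mul (i : Fin ℓ) (f : Fin ℓ → ℝ) :
    (∑ i', f i' * ((Pi.single (M := fun _ => ℤ) i 1 i' : ℤ) : ℝ)) = f i := by
  rw [Finset.sum_eq_single i]
  · simp
  · intro i' _ hi'; rw [Pi.single_eq_of_ne hi']; simp
  · intro h; exact absurd (Finset.mem_univ i) h

lemma sum_single_mul' (i : Fin ℓ) (f : Fin ℓ → ℝ) :
    (∑ i', ((Pi.single (M := fun _ => ℤ) i 1 i' : ℤ) : ℝ) * f i') = f i := by
  rw [Finset.sum_congr rfl (fun i' _ => mul_comm (((Pi.single (M := fun _ => ℤ) i 1 i' : ℤ) : ℝ)) (f i'))]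
  exact sum_single_mul i f

lemma tk_single (i : Fin ℓ) (θ : Fin ℓ → ℝ) : tk (Pi.single i 1) θ = 2 * π * θ i := by
  rw [tk, sum_single_mul' i θ]

lemma klin_single (i : Fin ℓ) (ω : Fin ℓ → ℝ) : klin (Pi.single i 1) ω = 2 * π * ω i := by
  rw [klin, sum_single_mul' i ω]

lemma ker_mem_orb_ker {i i' : Fin ℓ} (h : ker i' ∈ orb (ker i)) : i' = i := by
  have h2 := (mem_orb.1 h).2
  simp only [ker] at h2
  have hnn : (0 : ℤ) ≤ ((i : ℕ) : ℤ) := Int.ofNat_nonneg _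
  have hnn' : (0 : ℤ) ≤ ((i' : ℕ) : ℤ) := Int.ofNat_nonneg _
  have : ((i' : ℕ) : ℤ) = ((i : ℕ) : ℤ) := by omega
  have : (i' : ℕ) = (i : ℕ) := by exact_mod_cast this
  exact Fin.ext this

/-! ## lindU1 as a sum of modes -/

lemma lindU1_eq (A : Fin ℓ → ℝ) :
    lindU1 A = fun θ x => ∑ i, A i * md (ker i) θ x := by
  funext θ x
  refine Finset.sum_congr rfl fun i _ => ?_
  rw [md, ker, tk_single]
  have : ((((i : ℕ) : ℤ) + 1 : ℤ) : ℝ) = ((i : ℕ) + 1 : ℝ) := by push_cast; ring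
  rw [this, mul_assoc]

/-! ## the operator applied to a sum of modes -/

lemma M0_apply {ι : Type*} (μ : ℝ) (s : Finset ι) (P : ι → (Fin ℓ → ℤ) × ℤ) (c : ι → ℝ)
    (θ : Fin ℓ → ℝ) (x : ℝ) :
    thetaD (omega0 μ ℓ) (thetaD (omega0 μ ℓ) (fun θ x => ∑ i ∈ s, c i * md (P i) θ x)) θ x
      - xD (xD (fun θ x => ∑ i ∈ s, c i * md (P i) θ x)) θ x
      - μ * xD (xD (xD (xD (fun θ x => ∑ i ∈ s, c i * md (P i) θ x)))) θ x
    = ∑ i ∈ s, (-(4 * π ^ 2) * Fres μ ℓ (P i).1 (P i).2) * c i * md (P i) θ x := by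
  rw [thetaD_sum_md s P c (omega0 μ ℓ), thetaD_sum_ms s P _ (omega0 μ ℓ),
    xD_sum_md s P c, xD_sum_mcs s P _, xD_sum_md s P _, xD_sum_mcs s P _]
  rw [← Finset.sum_sub_distrib, Finset.mul_sum, ← Finset.sum_sub_distrib]
  refine Finset.sum_congr rfl fun i _ => ?_
  have hsc : (∑ i', ((P i).1 i' : ℝ) * omega0 μ ℓ i')
      = ∑ i', omega0 μ ℓ i' * ((P i).1 i' : ℝ) :=
    Finset.sum_congr rfl fun _ _ => mul_comm _ _
  simp only [klin, Fres, hsc]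
  ring

lemma twoterm (μ : ℝ) (ω' A : Fin ℓ → ℝ) (θ : Fin ℓ → ℝ) (x : ℝ) :
    2 * thetaD ω' (thetaD (omega0 μ ℓ) (lindU1 A)) θ x
      = ∑ i, (-(8 * π ^ 2) * omega0 μ ℓ i * ω' i * A i) * md (ker i) θ x := by
  rw [lindU1_eq, thetaD_sum_md Finset.univ ker A (omega0 μ ℓ),
    thetaD_sum_ms Finset.univ ker _ ω']
  rw [Finset.mul_sum]
  refine Finset.sum_congr rfl fun i _ => ?_
  rw [show (ker i).1 = Pi.single i 1 from rfl, klin_single, klin_single]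
  ring

end Lind

end LindstedtAux

open Lind in
/-- The inductive step of the Lindstedt construction for the Boussinesq equation:
the order-`m` equation `M₀U + 2(ω'·∂_θ)(ω⁰·∂_θ)U₁ = R` has a unique solution
`(ω', U)`, with `U` unique among finite combinations of non-resonant cosine modes. -/
theorem lindstedt_inductive_step
    (μ : ℝ) (hμ : 0 < μ)
    (hnz : ∀ j : ℕ, 1 ≤ j → 1 - 4 * π ^ 2 * μ * (j : ℝ) ^ 2 ≠ 0)
    (ℓ : ℕ) (hℓ : 1 ≤ ℓ)
    (hchar : ∀ j : ℕ, 1 ≤ j → (0 < 1 - 4 * π ^ 2 * μ * (j : ℝ) ^ 2 ↔ j ≤ ℓ))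
    (A : Fin ℓ → ℝ) (hA : ∀ i, A i ≠ 0)
    (R : (Fin ℓ → ℝ) → ℝ → ℝ)
    (ΛR : Finset ((Fin ℓ → ℤ) × ℕ)) (cR : (Fin ℓ → ℤ) × ℕ → ℝ)
    (hjR : ∀ p ∈ ΛR, 1 ≤ p.2)
    (hRrep : ∀ θ x, R θ x = ∑ p ∈ ΛR,
      cR p * Real.cos (2 * π * ∑ i, (p.1 i : ℝ) * θ i) * Real.cos (2 * π * (p.2 : ℝ) * x))
    (hFR : ∀ p ∈ ΛR, ¬ ExcMode ℓ p.1 (p.2 : ℤ) → Fres μ ℓ p.1 (p.2 : ℤ) ≠ 0) :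
    ∃ (ω' : Fin ℓ → ℝ) (U : (Fin ℓ → ℝ) → ℝ → ℝ),
      (IsNonresonantTrigPoly μ ℓ U ∧
        ∀ θ x,
          thetaD (omega0 μ ℓ) (thetaD (omega0 μ ℓ) U) θ x - xD (xD U) θ x
            - μ * xD (xD (xD (xD U))) θ x
            + 2 * thetaD ω' (thetaD (omega0 μ ℓ) (lindU1 A)) θ x = R θ x) ∧
      ∀ (ω'' : Fin ℓ → ℝ) (U'' : (Fin ℓ → ℝ) → ℝ → ℝ),
        IsNonresonantTrigPoly μ ℓ U'' →
        (∀ θ x,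
          thetaD (omega0 μ ℓ) (thetaD (omega0 μ ℓ) U'') θ x - xD (xD U'') θ x
            - μ * xD (xD (xD (xD U''))) θ x
            + 2 * thetaD ω'' (thetaD (omega0 μ ℓ) (lindU1 A)) θ x = R θ x) →
        ω'' = ω' ∧ ∀ θ x, U'' θ x = U θ x := by
  classical
  have hπ : (π : ℝ) ≠ 0 := Real.pi_ne_zero
  have h4 : (4 * π ^ 2 : ℝ) ≠ 0 := by positivity
  -- kernel facts
  have hpos : ∀ i : Fin ℓ, 0 < 1 - 4 * π ^ 2 * μ * (((i : ℕ) : ℝ) + 1) ^ 2 := by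
    intro i
    have h1 : 1 ≤ (i : ℕ) + 1 := by omega
    have h2 : (i : ℕ) + 1 ≤ ℓ := by have := i.2; omega
    have := (hchar ((i : ℕ) + 1) h1).2 h2
    push_cast at this
    exact this
  have homega_ne : ∀ i : Fin ℓ, omega0 μ ℓ i ≠ 0 := by
    intro i
    have h1 : (0 : ℝ) < ((i : ℕ) : ℝ) + 1 := by positivity
    have h2 : 0 < Real.sqrt (1 - 4 * π ^ 2 * μ * (((i : ℕ) : ℝ) + 1) ^ 2) :=
      Real.sqrt_pos.2 (hpos i)
    exact ne_of_gt (mul_pos h1 h2)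
  have hFker : ∀ i : Fin ℓ, Fres μ ℓ (ker i).1 (ker i).2 = 0 := by
    intro i
    show Fres μ ℓ (Pi.single i 1) (((i : ℕ) : ℤ) + 1) = 0
    have hsq : (omega0 μ ℓ i) ^ 2
        = (((i : ℕ) : ℝ) + 1) ^ 2 * (1 - 4 * π ^ 2 * μ * (((i : ℕ) : ℝ) + 1) ^ 2) := by
      simp only [omega0, mul_pow]
      rw [Real.sq_sqrt (le_of_lt (hpos i))]
    have hc : ((((i : ℕ) : ℤ) + 1 : ℤ) : ℝ) = ((i : ℕ) : ℝ) + 1 := by push_cast; ring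
    simp only [Fres, sum_single_mul i (omega0 μ ℓ), hc, hsq]
    ring
  have hFker_orb : ∀ (i : Fin ℓ) (q : (Fin ℓ → ℤ) × ℤ), q ∈ orb (ker i) →
      Fres μ ℓ q.1 q.2 = 0 := fun i q hq => (Fres_orb μ hq).trans (hFker i)
  -- transfer R to integer modes
  set P : (Fin ℓ → ℤ) × ℕ → (Fin ℓ → ℤ) × ℤ := fun p => (p.1, (p.2 : ℤ)) with hPdef
  set Λ₀ := ΛR.image P with hΛ₀def
  set c₀ : (Fin ℓ → ℤ) × ℤ → ℝ := fun q => ∑ p ∈ ΛR.filter (fun p => P p = q), cR p with hc₀def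
  have hR0 : ∀ θ x, R θ x = ∑ q ∈ Λ₀, c₀ q * md q θ x := by
    intro θ x
    rw [hRrep θ x]
    have e1 : ∀ p ∈ ΛR, cR p * Real.cos (2 * π * ∑ i, ((p.1 i : ℤ) : ℝ) * θ i)
        * Real.cos (2 * π * ((p.2 : ℕ) : ℝ) * x) = cR p * md (P p) θ x := by
      intro p _
      rw [hPdef]
      simp only [md, tk]
      push_cast
      ring
    rw [Finset.sum_congr rfl e1]
    rw [← Finset.sum_fiberwise_of_maps_to (fun p hp => Finset.mem_image_of_mem P hp)
      (fun p => cR p * md (P p) θ x)]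
    refine Finset.sum_congr rfl fun q hq => ?_
    have e2 : ∀ p ∈ ΛR.filter (fun p => P p = q), cR p * md (P p) θ x
        = cR p * md q θ x := by
      intro p hp
      rw [(Finset.mem_filter.1 hp).2]
    rw [Finset.sum_congr rfl e2, ← Finset.sum_mul, hc₀def]
  have hj0 : ∀ q ∈ Λ₀, 1 ≤ q.2 := by
    intro q hq
    obtain ⟨p, hp, rfl⟩ := Finset.mem_image.1 hq
    have := hjR p hp
    simp only [hPdef]
    exact_mod_cast this
  have hF0 : ∀ q ∈ Λ₀, ¬ ExcMode ℓ q.1 q.2 → Fres μ ℓ q.1 q.2 ≠ 0 := by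
    intro q hq
    obtain ⟨p, hp, rfl⟩ := Finset.mem_image.1 hq
    exact hFR p hp
  -- the solution
  set S := Λ₀.filter (fun q => ¬ ExcMode ℓ q.1 q.2) with hSdef
  have hFS : ∀ q ∈ S, Fres μ ℓ q.1 q.2 ≠ 0 := fun q hq =>
    hF0 q (Finset.mem_filter.1 hq).1 (Finset.mem_filter.1 hq).2
  set cU : (Fin ℓ → ℤ) × ℤ → ℝ :=
    fun q => c₀ q / (-(4 * π ^ 2) * Fres μ ℓ q.1 q.2) with hcUdef
  set U : (Fin ℓ → ℝ) → ℝ → ℝ := fun θ x => ∑ q ∈ S, cU q * md q θ x with hUdef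
  set r : Fin ℓ → ℝ := fun i => ∑ q ∈ Λ₀.filter (fun q => q ∈ orb (ker i)), c₀ q with hrdef
  set ω' : Fin ℓ → ℝ := fun i => r i / (-(8 * π ^ 2) * omega0 μ ℓ i * A i) with hω'def
  have hden : ∀ i : Fin ℓ, -(8 * π ^ 2) * omega0 μ ℓ i * A i ≠ 0 := by
    intro i
    have h8 : (8 * π ^ 2 : ℝ) ≠ 0 := by positivity
    exact mul_ne_zero (mul_ne_zero (neg_ne_zero.2 h8) (homega_ne i)) (hA i)
  -- main computational identity
  have hML : ∀ θ x,
      (∑ q ∈ S, (-(4 * π ^ 2) * Fres μ ℓ q.1 q.2) * cU q * md q θ x)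
        + (∑ i, (-(8 * π ^ 2) * omega0 μ ℓ i * ω' i * A i) * md (ker i) θ x) = R θ x := by
    intro θ x
    have e1 : ∀ q ∈ S, (-(4 * π ^ 2) * Fres μ ℓ q.1 q.2) * cU q * md q θ x
        = c₀ q * md q θ x := by
      intro q hq
      have hne : -(4 * π ^ 2) * Fres μ ℓ q.1 q.2 ≠ 0 :=
        mul_ne_zero (neg_ne_zero.2 h4) (hFS q hq)
      simp only [hcUdef]
      rw [mul_comm (-(4 * π ^ 2) * Fres μ ℓ q.1 q.2)
        (c₀ q / (-(4 * π ^ 2) * Fres μ ℓ q.1 q.2)), div_mul_cancel₀ _ hne]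
    have e2 : ∀ i ∈ (Finset.univ : Finset (Fin ℓ)),
        (-(8 * π ^ 2) * omega0 μ ℓ i * ω' i * A i) * md (ker i) θ x
          = r i * md (ker i) θ x := by
      intro i _
      simp only [hω'def]
      rw [show -(8 * π ^ 2) * omega0 μ ℓ i
          * (r i / (-(8 * π ^ 2) * omega0 μ ℓ i * A i)) * A i
          = r i / (-(8 * π ^ 2) * omega0 μ ℓ i * A i)
            * (-(8 * π ^ 2) * omega0 μ ℓ i * A i) from by ring,
        div_mul_cancel₀ _ (hden i)]
    rw [Finset.sum_congr rfl e1, Finset.sum_congr rfl e2, hR0 θ x]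
    rw [← Finset.sum_filter_add_sum_filter_not Λ₀ (fun q => ExcMode ℓ q.1 q.2)
      (fun q => c₀ q * md q θ x)]
    rw [add_comm (∑ q ∈ Λ₀.filter (fun q => ExcMode ℓ q.1 q.2), c₀ q * md q θ x)]
    congr 1
    -- Σ_i r i * md (ker i) = Σ over exceptional part
    set i₀ : Fin ℓ := ⟨0, by omega⟩
    set gI : (Fin ℓ → ℤ) × ℤ → Fin ℓ :=
      fun q => if h : ∃ i : Fin ℓ, q.2 = ((i : ℕ) : ℤ) + 1 then h.choose else i₀ with hgIdef
    have hfib : ∀ i : Fin ℓ,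
        (Λ₀.filter (fun q => ExcMode ℓ q.1 q.2)).filter (fun q => gI q = i)
          = Λ₀.filter (fun q => q ∈ orb (ker i)) := by
      intro i
      ext q
      simp only [Finset.mem_filter, and_assoc]
      constructor
      · rintro ⟨hq, hexc, hgi⟩
        obtain ⟨i', hk', hj'⟩ := hexc
        have hex : ∃ i'' : Fin ℓ, q.2 = ((i'' : ℕ) : ℤ) + 1 := ⟨i', hj'⟩
        have hch : q.2 = ((hex.choose : ℕ) : ℤ) + 1 := hex.choose_spec
        have hgi2 : gI q = hex.choose := by simp only [hgIdef]; rw [dif_pos hex]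
        have hii : i' = i := by
          have h1 : ((i' : ℕ) : ℤ) + 1 = ((i : ℕ) : ℤ) + 1 := by
            rw [← hj', hch, ← hgi, hgi2]
          have : (i' : ℕ) = (i : ℕ) := by omega
          exact Fin.ext this
        subst hii
        refine ⟨hq, mem_orb.2 ⟨?_, Or.inl ?_⟩⟩
        · rcases hk' with h | h
          · exact Or.inl (by rw [h]; rfl)
          · exact Or.inr (by rw [h]; rfl)
        · rw [hj']; rfl
      · rintro ⟨hq, horb⟩
        obtain ⟨hk, hj⟩ := mem_orb.1 horb
        have hj1 : 1 ≤ q.2 := hj0 q hq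
        have hknn : (0 : ℤ) ≤ ((i : ℕ) : ℤ) := Int.ofNat_nonneg _
        have hj2 : q.2 = ((i : ℕ) : ℤ) + 1 := by
          rcases hj with h | h
          · exact h
          · exfalso; rw [show (ker i).2 = ((i : ℕ) : ℤ) + 1 from rfl] at h; omega
        refine ⟨hq, ⟨i, ?_, hj2⟩, ?_⟩
        · rcases hk with h | h
          · exact Or.inl h
          · exact Or.inr h
        · have hex : ∃ i'' : Fin ℓ, q.2 = ((i'' : ℕ) : ℤ) + 1 := ⟨i, hj2⟩
          have hch : q.2 = ((hex.choose : ℕ) : ℤ) + 1 := hex.choose_spec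
          have : (hex.choose : ℕ) = (i : ℕ) := by omega
          simp only [hgIdef]
          rw [dif_pos hex]
          exact Fin.ext this
    rw [← Finset.sum_fiberwise (Λ₀.filter (fun q => ExcMode ℓ q.1 q.2)) gI
      (fun q => c₀ q * md q θ x)]
    refine Finset.sum_congr rfl fun i _ => ?_
    rw [hfib i]
    have e3 : ∀ q ∈ Λ₀.filter (fun q => q ∈ orb (ker i)),
        c₀ q * md q θ x = c₀ q * md (ker i) θ x := by
      intro q hq
      rw [md_orb (Finset.mem_filter.1 hq).2]
    rw [Finset.sum_congr rfl e3, ← Finset.sum_mul, hrdef]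
  -- existence: the equation
  have hEqU : ∀ θ x,
      thetaD (omega0 μ ℓ) (thetaD (omega0 μ ℓ) U) θ x - xD (xD U) θ x
        - μ * xD (xD (xD (xD U))) θ x
        + 2 * thetaD ω' (thetaD (omega0 μ ℓ) (lindU1 A)) θ x = R θ x := by
    intro θ x
    rw [hUdef, M0_apply μ S (fun q => q) cU θ x, twoterm μ ω' A θ x]
    exact hML θ x
  refine ⟨ω', U, ⟨⟨S, cU, hFS, fun θ x => ?_⟩, hEqU⟩, ?_⟩
  · rw [hUdef]
    refine Finset.sum_congr rfl fun q _ => ?_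
    rw [md, tk, ← mul_assoc]
  -- uniqueness
  intro ω'' U'' hNR hEq''
  obtain ⟨Λ'', c'', hF'', hrep''⟩ := hNR
  have hU''fun : U'' = fun θ x => ∑ q ∈ Λ'', c'' q * md q θ x := by
    funext θ x
    rw [hrep'' θ x]
    exact Finset.sum_congr rfl fun q _ => by rw [md, tk, ← mul_assoc]
  set K : Finset ((Fin ℓ → ℤ) × ℤ) := Finset.univ.image ker with hKdef
  set Λa := (Λ'' ∪ S) ∪ K with hΛadef
  have hsub'' : Λ'' ⊆ Λa := fun q hq =>
    Finset.mem_union_left _ (Finset.mem_union_left _ hq)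
  have hsubS : S ⊆ Λa := fun q hq =>
    Finset.mem_union_left _ (Finset.mem_union_right _ hq)
  have hkerΛa : ∀ i : Fin ℓ, ker i ∈ Λa := fun i =>
    Finset.mem_union_right _ (Finset.mem_image_of_mem ker (Finset.mem_univ i))
  set b : Fin ℓ → ℝ :=
    fun i => -(8 * π ^ 2) * omega0 μ ℓ i * (ω'' i - ω' i) * A i with hbdef
  set d1 : (Fin ℓ → ℤ) × ℤ → ℝ :=
    fun q => if q ∈ Λ'' then (-(4 * π ^ 2) * Fres μ ℓ q.1 q.2) * c'' q else 0 with hd1def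
  set d2 : (Fin ℓ → ℤ) × ℤ → ℝ :=
    fun q => if q ∈ S then (-(4 * π ^ 2) * Fres μ ℓ q.1 q.2) * cU q else 0 with hd2def
  set d3 : (Fin ℓ → ℤ) × ℤ → ℝ :=
    fun q => ∑ i, if q = ker i then b i else 0 with hd3def
  have hsum1 : ∀ θ x, ∑ q ∈ Λa, d1 q * md q θ x
      = ∑ q ∈ Λ'', (-(4 * π ^ 2) * Fres μ ℓ q.1 q.2) * c'' q * md q θ x := by
    intro θ x
    rw [← Finset.sum_subset hsub'' (fun q _ hq => by simp [hd1def, hq])]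
    exact Finset.sum_congr rfl fun q hq => by simp [hd1def, hq]
  have hsum2 : ∀ θ x, ∑ q ∈ Λa, d2 q * md q θ x
      = ∑ q ∈ S, (-(4 * π ^ 2) * Fres μ ℓ q.1 q.2) * cU q * md q θ x := by
    intro θ x
    rw [← Finset.sum_subset hsubS (fun q _ hq => by simp [hd2def, hq])]
    exact Finset.sum_congr rfl fun q hq => by simp [hd2def, hq]
  have hsum3 : ∀ θ x, ∑ q ∈ Λa, d3 q * md q θ x
      = ∑ i, b i * md (ker i) θ x := by
    intro θ x
    have e : ∀ q ∈ Λa, d3 q * md q θ x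
        = ∑ i, (if q = ker i then b i * md q θ x else 0) := by
      intro q _
      simp only [hd3def]
      rw [Finset.sum_mul]
      exact Finset.sum_congr rfl fun i _ => by rw [ite_mul, zero_mul]
    rw [Finset.sum_congr rfl e, Finset.sum_comm]
    refine Finset.sum_congr rfl fun i _ => ?_
    rw [Finset.sum_ite_eq' Λa (ker i) (fun q => b i * md q θ x), if_pos (hkerΛa i)]
  have hzero : ∀ θ x, ∑ q ∈ Λa, (d1 q - d2 q + d3 q) * md q θ x = 0 := by
    intro θ x
    have hsplit : ∑ q ∈ Λa, (d1 q - d2 q + d3 q) * md q θ x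
        = (∑ q ∈ Λa, d1 q * md q θ x) - (∑ q ∈ Λa, d2 q * md q θ x)
          + (∑ q ∈ Λa, d3 q * md q θ x) := by
      rw [← Finset.sum_sub_distrib, ← Finset.sum_add_distrib]
      exact Finset.sum_congr rfl fun q _ => by ring
    rw [hsplit, hsum1, hsum2, hsum3]
    have e'' := hEq'' θ x
    rw [hU''fun, M0_apply μ Λ'' (fun q => q) c'' θ x, twoterm μ ω'' A θ x] at e''
    have eU := hML θ x
    have hbsplit : ∑ i, b i * md (ker i) θ x
        = (∑ i, (-(8 * π ^ 2) * omega0 μ ℓ i * ω'' i * A i) * md (ker i) θ x)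
          - (∑ i, (-(8 * π ^ 2) * omega0 μ ℓ i * ω' i * A i) * md (ker i) θ x) := by
      rw [← Finset.sum_sub_distrib]
      exact Finset.sum_congr rfl fun i _ => by simp only [hbdef]; ring
    rw [hbsplit]
    linarith
  have hb0 : ∀ i : Fin ℓ, b i = 0 := by
    intro i
    have h := coeff_vanish Λa (fun q => d1 q - d2 q + d3 q) hzero (ker i)
    have e : ∀ q ∈ Λa.filter (fun q => q ∈ orb (ker i)),
        d1 q - d2 q + d3 q = d3 q := by
      intro q hq
      have hFq := hFker_orb i q (Finset.mem_filter.1 hq).2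
      have h1 : d1 q = 0 := by simp [hd1def, hFq]
      have h2 : d2 q = 0 := by simp [hd2def, hFq]
      rw [h1, h2]; ring
    rw [Finset.sum_congr rfl e] at h
    have e2 : ∑ q ∈ Λa.filter (fun q => q ∈ orb (ker i)), d3 q = b i := by
      simp only [hd3def]
      rw [Finset.sum_comm]
      rw [Finset.sum_eq_single i]
      · rw [Finset.sum_ite_eq' _ (ker i) (fun _ => b i)]
        rw [if_pos (Finset.mem_filter.2 ⟨hkerΛa i, mem_orb_self (ker i)⟩)]
      · intro i' _ hi'
        rw [Finset.sum_ite_eq' _ (ker i') (fun _ => b i')]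
        rw [if_neg]
        intro hmem
        exact hi' (ker_mem_orb_ker (Finset.mem_filter.1 hmem).2)
      · intro hmem; exact absurd (Finset.mem_univ i) hmem
    rw [e2] at h
    exact h
  have hωeq : ω'' = ω' := by
    funext i
    have h := hb0 i
    simp only [hbdef] at h
    have h8 : (8 * π ^ 2 : ℝ) ≠ 0 := by positivity
    have hdiff : ω'' i - ω' i = 0 := by
      by_contra hne2
      exact (mul_ne_zero (mul_ne_zero (mul_ne_zero (neg_ne_zero.2 h8)
        (homega_ne i)) hne2) (hA i)) h
    linarith
  refine ⟨hωeq, ?_⟩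
  have hd30 : ∀ q, d3 q = 0 := by
    intro q
    simp only [hd3def]
    exact Finset.sum_eq_zero fun i _ => by rw [hb0 i]; simp
  have hzero2 : ∀ θ x, ∑ q ∈ Λa, (d1 q - d2 q) * md q θ x = 0 := by
    intro θ x
    rw [← hzero θ x]
    exact Finset.sum_congr rfl fun q _ => by rw [hd30 q]; ring
  set g' : (Fin ℓ → ℤ) × ℤ → ℝ :=
    fun q => if Fres μ ℓ q.1 q.2 = 0 then 0 else (-(4 * π ^ 2) * Fres μ ℓ q.1 q.2)⁻¹
    with hg'def
  have hginv : ∀ p q, q ∈ orb p → g' q = g' p := by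
    intro p q hmem
    simp only [hg'def, Fres_orb μ hmem]
  have hcan := cancel Λa (fun q => d1 q - d2 q) g' hginv hzero2
  intro θ x
  have hper : ∀ q, g' q * (d1 q - d2 q)
      = (if q ∈ Λ'' then c'' q else 0) - (if q ∈ S then cU q else 0) := by
    intro q
    by_cases hFq : Fres μ ℓ q.1 q.2 = 0
    · have hq1 : q ∉ Λ'' := fun h => hF'' q h hFq
      have hq2 : q ∉ S := fun h => hFS q h hFq
      simp [hg'def, hd1def, hd2def, hFq, hq1, hq2]
    · have hne : -(4 * π ^ 2) * Fres μ ℓ q.1 q.2 ≠ 0 :=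
        mul_ne_zero (neg_ne_zero.2 h4) hFq
      simp only [hg'def, hd1def, hd2def, if_neg hFq, mul_sub]
      congr 1
      · split
        · exact inv_mul_cancel_left₀ hne _
        · exact mul_zero _
      · split
        · exact inv_mul_cancel_left₀ hne _
        · exact mul_zero _
  have hc := hcan θ x
  have e : ∀ q ∈ Λa, g' q * (d1 q - d2 q) * md q θ x
      = ((if q ∈ Λ'' then c'' q else 0) - (if q ∈ S then cU q else 0)) * md q θ x := by
    intro q _
    rw [hper q]
  rw [Finset.sum_congr rfl e] at hc
  have esplit : ∑ q ∈ Λa, ((if q ∈ Λ'' then c'' q else 0)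
      - (if q ∈ S then cU q else 0)) * md q θ x
      = (∑ q ∈ Λa, (if q ∈ Λ'' then c'' q else 0) * md q θ x)
        - (∑ q ∈ Λa, (if q ∈ S then cU q else 0) * md q θ x) := by
    rw [← Finset.sum_sub_distrib]
    exact Finset.sum_congr rfl fun q _ => by ring
  rw [esplit] at hc
  have h1 : ∑ q ∈ Λa, (if q ∈ Λ'' then c'' q else 0) * md q θ x
      = ∑ q ∈ Λ'', c'' q * md q θ x := by
    rw [← Finset.sum_subset hsub'' (fun q _ hq => by simp [hq])]
    exact Finset.sum_congr rfl fun q hq => by rw [if_pos hq]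
  have h2 : ∑ q ∈ Λa, (if q ∈ S then cU q else 0) * md q θ x
      = ∑ q ∈ S, cU q * md q θ x := by
    rw [← Finset.sum_subset hsubS (fun q _ hq => by simp [hq])]
    exact Finset.sum_congr rfl fun q hq => by rw [if_pos hq]
  rw [h1, h2] at hc
  have hU'' : U'' θ x = ∑ q ∈ Λ'', c'' q * md q θ x := by rw [hU''fun]
  have hUx : U θ x = ∑ q ∈ S, cU q * md q θ x := by rw [hUdef]
  rw [hU'', hUx]
  linarith
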